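/- Let σ₁², σ₂² > 0 and P > 0 with C(ξ) = (1/2)·log(1+ξ). The function f(α) = α·[C(P/(α σ₁²)) − C(P/(α(σ₁²+σ₂²)))] for α ∈ (0,1] satisfies f(α) ≤ C(P/σ₁²) − C(P/(σ₁²+σ₂²)) = f(1). -/

import Mathlib

noncomputable def C (ξ : ℝ) : ℝ := (1/2) * Real.log (1 + ξ)

lemma g_concave (σ1 σ2 : ℝ) (h1 : 0 < σ1) (h2 : 0 < σ2) :
    ConcaveOn ℝ (Set.Ici (0:ℝ))
      (fun x => (1/2) * (Real.log (σ1 + x) - Real.log (σ1 + σ2 + x))) := by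
  set g : ℝ → ℝ := fun x => (1/2) * (Real.log (σ1 + x) - Real.log (σ1 + σ2 + x)) with hg
  have hd : ∀ x : ℝ, 0 < x → HasDerivAt g ((1/2) * ((σ1 + x)⁻¹ - (σ1 + σ2 + x)⁻¹)) x := by
    intro x hx
    have ha : (0:ℝ) < σ1 + x := by linarith
    have hb : (0:ℝ) < σ1 + σ2 + x := by linarith
    have d1 : HasDerivAt (fun x : ℝ => Real.log (σ1 + x)) ((σ1 + x)⁻¹) x := by
      have h := (Real.hasDerivAt_log ha.ne').comp x ((hasDerivAt_id x).const_add σ1)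
      simp at h
      exact h
    have d2 : HasDerivAt (fun x : ℝ => Real.log (σ1 + σ2 + x)) ((σ1 + σ2 + x)⁻¹) x := by
      have h := (Real.hasDerivAt_log hb.ne').comp x ((hasDerivAt_id x).const_add (σ1 + σ2))
      simp at h
      exact h
    have := (d1.sub d2).const_mul (1/2 : ℝ)
    simpa [hg] using this
  have hint : interior (Set.Ici (0:ℝ)) = Set.Ioi 0 := interior_Ici
  apply AntitoneOn.concaveOn_of_deriv (convex_Ici 0)
  · -- continuity
    intro x hx
    have hx0 : (0:ℝ) ≤ x := hx
    have ha : (0:ℝ) < σ1 + x := by linarith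
    have hb : (0:ℝ) < σ1 + σ2 + x := by linarith
    exact (ContinuousAt.continuousWithinAt (by
      have c1 : ContinuousAt (fun x : ℝ => Real.log (σ1 + x)) x :=
        (Real.continuousAt_log ha.ne').comp (by fun_prop)
      have c2 : ContinuousAt (fun x : ℝ => Real.log (σ1 + σ2 + x)) x :=
        (Real.continuousAt_log hb.ne').comp (by fun_prop)
      exact (c1.sub c2).const_mul _))
  · rw [hint]
    intro x hx
    exact (hd x hx).differentiableAt.differentiableWithinAt
  · rw [hint]
    intro x hx y hy hxy
    rw [(hd x hx).deriv, (hd y hy).deriv]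
    have hax : (0:ℝ) < σ1 + x := by have := Set.mem_Ioi.mp hx; linarith
    have hbx : (0:ℝ) < σ1 + σ2 + x := by have := Set.mem_Ioi.mp hx; linarith
    have hay : (0:ℝ) < σ1 + y := by have := Set.mem_Ioi.mp hy; linarith
    have hby : (0:ℝ) < σ1 + σ2 + y := by have := Set.mem_Ioi.mp hy; linarith
    have ex : (σ1 + x)⁻¹ - (σ1 + σ2 + x)⁻¹ = σ2 / ((σ1 + x) * (σ1 + σ2 + x)) := by
      field_simp
      ring
    have ey : (σ1 + y)⁻¹ - (σ1 + σ2 + y)⁻¹ = σ2 / ((σ1 + y) * (σ1 + σ2 + y)) := by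
      field_simp
      ring
    rw [ex, ey]
    have hle : (σ1 + x) * (σ1 + σ2 + x) ≤ (σ1 + y) * (σ1 + σ2 + y) := by nlinarith
    have := div_le_div_of_nonneg_left h2.le (by positivity) hle
    nlinarith [this]

theorem bursty_no_better (σ1 σ2 P : ℝ) (h1 : 0 < σ1) (h2 : 0 < σ2) (hP : 0 < P) :
    ∀ α : ℝ, α ∈ Set.Ioc (0:ℝ) 1 →
      α * (C (P / (α * σ1)) - C (P / (α * (σ1 + σ2)))) ≤
        C (P / σ1) - C (P / (σ1 + σ2)) := by
  intro α hα
  obtain ⟨hα0, hα1⟩ := hα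
  have hconc := g_concave σ1 σ2 h1 h2
  set y : ℝ := P / α with hy
  have hy0 : 0 < y := div_pos hP hα0
  have hxy : α * y + (1 - α) * 0 = P := by rw [hy]; field_simp; ring
  have h' := hconc.2 (Set.mem_Ici.mpr hy0.le) (Set.mem_Ici.mpr le_rfl) hα0.le
    (by linarith : (0:ℝ) ≤ 1 - α) (by ring : α + (1 - α) = 1)
  simp only [smul_eq_mul, hxy] at h'
  -- h' : α * ((1/2)*(log(σ1+y)-log(σ1+σ2+y))) + (1-α)*((1/2)*(log(σ1+0)-log(σ1+σ2+0))) ≤ (1/2)*(log(σ1+P)-log(σ1+σ2+P))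
  have hs : (0:ℝ) < σ1 + σ2 := by linarith
  have hC : ∀ a b : ℝ, 0 < a → 0 < b → C (a / b) = (1/2) * (Real.log (b + a) - Real.log b) := by
    intro a b ha hb
    have : 1 + a / b = (b + a) / b := by field_simp
    rw [C, this, Real.log_div (by positivity) hb.ne']
  have e1 : C (P / (α * σ1)) = (1/2) * (Real.log (σ1 + y) - Real.log σ1) := by
    have h : P / (α * σ1) = y / σ1 := by rw [hy]; field_simp
    rw [h, hC y σ1 hy0 h1]
  have e2 : C (P / (α * (σ1 + σ2))) = (1/2) * (Real.log (σ1 + σ2 + y) - Real.log (σ1 + σ2)) := by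
    have h : P / (α * (σ1 + σ2)) = y / (σ1 + σ2) := by rw [hy]; field_simp
    rw [h, hC y (σ1+σ2) hy0 hs]
  have e3 : C (P / σ1) = (1/2) * (Real.log (σ1 + P) - Real.log σ1) := hC P σ1 hP h1
  have e4 : C (P / (σ1 + σ2)) = (1/2) * (Real.log (σ1 + σ2 + P) - Real.log (σ1 + σ2)) :=
    hC P (σ1+σ2) hP hs
  rw [e1, e2, e3, e4]
  simp only [add_zero] at h'
  nlinarith [h']
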